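/- ∑_{k=1}^∞ (ζ(k+1) − 1)·(k+1) = 1 + ζ(2), where ζ is the Riemann zeta function (the case D(1,−1;1) of the Adamchik–Srivastava formula). -/

import Mathlib

/-- The Riemann zeta function at a natural argument, `ζ(s) = ∑_{n=1}^∞ 1/n^s`. -/
noncomputable def zetaNat (s : ℕ) : ℝ := ∑' n : ℕ, 1 / ((n : ℝ) + 1) ^ s

private lemma summable_zeta (s : ℕ) (hs : 1 < s) :
    Summable (fun n : ℕ => 1 / ((n : ℝ) + 1) ^ s) := by
  have h := (Real.summable_one_div_nat_pow (p := s)).mpr hs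
  have := (summable_nat_add_iff (f := fun n : ℕ => 1 / (n : ℝ) ^ s) 1).mpr h
  simpa [Nat.cast_add] using this

private lemma hasSum_zeta (s : ℕ) (hs : 1 < s) :
    HasSum (fun n : ℕ => 1 / ((n : ℝ) + 1) ^ s) (zetaNat s) :=
  (summable_zeta s hs).hasSum

/-- tail sum: ζ(s) - 1 = ∑_{n} 1/(n+2)^s -/
private lemma hasSum_zeta_tail (s : ℕ) (hs : 1 < s) :
    HasSum (fun n : ℕ => 1 / ((n : ℝ) + 2) ^ s) (zetaNat s - 1) := by
  have h := (hasSum_nat_add_iff' (f := fun n : ℕ => 1 / ((n : ℝ) + 1) ^ s)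
    (g := zetaNat s) 1).mpr (hasSum_zeta s hs)
  simp only [Finset.range_one, Finset.sum_singleton, Nat.cast_zero] at h
  convert h using 2 with n
  case e'_3 => rfl
  · push_cast; ring_nf
  · norm_num

/-- inner sum over k for fixed n -/
private lemma hasSum_inner (n : ℕ) :
    HasSum (fun k : ℕ => ((k : ℝ) + 2) / ((n : ℝ) + 2) ^ (k + 2))
      (1 / ((n : ℝ) + 1) + 1 / ((n : ℝ) + 1) ^ 2 - 1 / ((n : ℝ) + 2)) := by
  set r : ℝ := (((n : ℝ) + 2))⁻¹ with hr_def
  have hn2 : (0:ℝ) < (n : ℝ) + 2 := by positivity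
  have hr : ‖r‖ < 1 := by
    rw [Real.norm_eq_abs, abs_of_pos (by positivity)]
    rw [inv_lt_one_iff₀]; right; linarith
  have h := hasSum_coe_mul_geometric_of_norm_lt_one hr
  have h2 := (hasSum_nat_add_iff' (f := fun k : ℕ => (k : ℝ) * r ^ k)
    (g := r / (1 - r) ^ 2) 2).mpr h
  have key : ∀ k : ℕ, ((k + 2 : ℕ) : ℝ) * r ^ (k + 2) =
      ((k : ℝ) + 2) / ((n : ℝ) + 2) ^ (k + 2) := by
    intro k
    rw [hr_def, div_eq_mul_inv, ← inv_pow]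
    push_cast
    ring
  have hsum : ∑ i ∈ Finset.range 2, (i : ℝ) * r ^ i = r := by
    simp [Finset.sum_range_succ]
  rw [hsum] at h2
  have hval : r / (1 - r) ^ 2 - r =
      1 / ((n : ℝ) + 1) + 1 / ((n : ℝ) + 1) ^ 2 - 1 / ((n : ℝ) + 2) := by
    have hn1 : ((n : ℝ) + 1) ≠ 0 := by positivity
    have hn2' : ((n : ℝ) + 2) ≠ 0 := ne_of_gt hn2
    have h1r : 1 - r = ((n : ℝ) + 1) / ((n : ℝ) + 2) := by
      rw [hr_def]; field_simp; ring
    rw [h1r, hr_def]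
    field_simp
    all_goals ring
  rw [hval] at h2
  exact h2.congr_fun fun k => (key k).symm

/-- telescoping -/
private lemma hasSum_telescope :
    HasSum (fun n : ℕ => 1 / ((n : ℝ) + 1) - 1 / ((n : ℝ) + 2)) 1 := by
  have hnn : ∀ n : ℕ, 0 ≤ 1 / ((n : ℝ) + 1) - 1 / ((n : ℝ) + 2) := by
    intro n
    have h1 : (0:ℝ) < (n : ℝ) + 1 := by positivity
    have h2 : (0:ℝ) < (n : ℝ) + 2 := by positivity
    have : 1 / ((n : ℝ) + 2) ≤ 1 / ((n : ℝ) + 1) :=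
      one_div_le_one_div_of_le h1 (by linarith)
    linarith
  rw [hasSum_iff_tendsto_nat_of_nonneg hnn]
  have hps : ∀ N : ℕ, ∑ i ∈ Finset.range N, (1 / ((i : ℝ) + 1) - 1 / ((i : ℝ) + 2))
      = 1 - 1 / ((N : ℝ) + 1) := by
    intro N
    induction N with
    | zero => simp
    | succ n ih =>
      rw [Finset.sum_range_succ, ih]
      push_cast
      ring
  simp only [hps]
  have : Filter.Tendsto (fun N : ℕ => 1 / ((N : ℝ) + 1)) Filter.atTop (nhds 0) :=
    tendsto_one_div_add_atTop_nhds_zero_nat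
  have h := Filter.Tendsto.sub (tendsto_const_nhds (x := (1:ℝ))) this
  simpa using h

/-- sum over n of inner values -/
private lemma hasSum_T :
    HasSum (fun n : ℕ => 1 / ((n : ℝ) + 1) + 1 / ((n : ℝ) + 1) ^ 2 - 1 / ((n : ℝ) + 2))
      (1 + zetaNat 2) := by
  have h1 := hasSum_telescope
  have h2 := hasSum_zeta 2 one_lt_two
  convert h1.add h2 using 2 with n
  ring

/-- `∑_{k=1}^∞ (ζ(k+1) − 1)(k+1) = 1 + ζ(2)`. -/
theorem D_one_neg_one_one :
    HasSum (fun k : ℕ => (zetaNat (k + 2) - 1) * ((k : ℝ) + 2)) (1 + zetaNat 2) := by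
  set F : ℕ × ℕ → ℝ := fun p => ((p.2 : ℝ) + 2) / ((p.1 : ℝ) + 2) ^ (p.2 + 2) with hF
  have hFnn : (0 : ℕ × ℕ → ℝ) ≤ F := by
    intro p; simp only [hF, Pi.zero_apply]; positivity
  have hfib : ∀ n : ℕ, HasSum (fun k => F (n, k))
      (1 / ((n : ℝ) + 1) + 1 / ((n : ℝ) + 1) ^ 2 - 1 / ((n : ℝ) + 2)) :=
    fun n => hasSum_inner n
  have hsumF : Summable F := by
    rw [summable_prod_of_nonneg hFnn]
    refine ⟨fun n => (hfib n).summable, ?_⟩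
    have : (fun n : ℕ => ∑' k : ℕ, F (n, k)) =
        fun n : ℕ => 1 / ((n : ℝ) + 1) + 1 / ((n : ℝ) + 1) ^ 2 - 1 / ((n : ℝ) + 2) := by
      funext n; exact (hfib n).tsum_eq
    rw [this]
    exact hasSum_T.summable
  obtain ⟨S, hS⟩ := hsumF
  have hSval : S = 1 + zetaNat 2 :=
    (hS.prod_fiberwise hfib).unique hasSum_T
  -- now swap
  have hswap : HasSum (F ∘ Prod.swap) S := by
    exact (Equiv.prodComm ℕ ℕ).hasSum_iff.mpr (by simpa [Function.comp] using hS)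
  have hfib2 : ∀ k : ℕ, HasSum (fun n => (F ∘ Prod.swap) (k, n))
      ((zetaNat (k + 2) - 1) * ((k : ℝ) + 2)) := by
    intro k
    have h := (hasSum_zeta_tail (k + 2) (by omega)).mul_right ((k : ℝ) + 2)
    convert h using 2 with n
    case e'_3 => rfl
    simp only [hF, Function.comp, Prod.swap]
    ring
  have := hswap.prod_fiberwise hfib2
  rwa [hSval] at this
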